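/- Let (X,d) be a δ-hyperbolic metric space (δ ≥ 0) and let a, x, x', y' be points of X with d(x,a) = d(x',a), d(x,x') ≤ 4δ, y' ∈ geod(a,x') (i.e., d(a,y') + d(y',x') = d(a,x')), and d(x',y') ≥ 4δ. Then y' ∈ δ-geod(a,x). -/
import Mathlib


/-- From Lemma 4.6 of Alvarez–Lafforgue: in a δ-hyperbolic space, if `d(x,a) = d(x',a)`,
`d(x,x') ≤ 4δ`, `y' ∈ geod(a,x')` and `d(x',y') ≥ 4δ`, then `y' ∈ δ-geod(a,x)`. -/
theorem mem_approx_geod_of_geod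
    {X : Type*} [MetricSpace X] (δ : ℝ) (hδ : 0 ≤ δ)
    (hhyp : ∀ x₁ x₂ x₃ x₄ : X, dist x₁ x₄ + dist x₂ x₃ ≤
      max (dist x₁ x₂ + dist x₃ x₄) (dist x₁ x₃ + dist x₂ x₄) + δ)
    (a x x' y' : X)
    (hxa : dist x a = dist x' a)
    (hxx' : dist x x' ≤ 4 * δ)
    (hy' : dist a y' + dist y' x' = dist a x')
    (hx'y' : 4 * δ ≤ dist x' y') :
    dist a y' + dist y' x ≤ dist a x + δ := by
  have h := hhyp x a x' y'
  rcases max_cases (dist x a + dist x' y') (dist x x' + dist a y') with ⟨he, _⟩ | ⟨he, _⟩ <;>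
    rw [he] at h
  · -- d(x,y') + d(a,x') ≤ d(x,a) + d(x',y') + δ
    have h1 : dist y' x ≤ dist x a - dist a y' + δ := by
      have := dist_comm x y'
      have := dist_comm x' y'
      linarith
    have := dist_comm x a
    linarith
  · have h1 : dist y' x ≤ δ := by
      have := dist_comm x y'
      have := dist_comm x' y'
      linarith
    have h2 : dist a y' ≤ dist a x' := by
      have := dist_nonneg (x := y') (y := x')
      linarith
    have := dist_comm x a
    have := dist_comm x' a
    linarith
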